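/- For b ≥ 1, let T_1 act on Q(q)[y_1,y_2] by T_1 = Δ*_{y_1,y_2}, i.e. (T_1 P)(y_1,y_2) = ((q-1)y_1 P(y_1,y_2) + (y_2-q y_1)P(y_2,y_1))/(y_2-y_1). Then (T_1 + q)((1-q)·t^b·y_1^b) = (1-q)·t^b·(y_1^b + (1-q)·∑_{a=1}^{b-1} y_1^a·y_2^{b-a} + y_2^b), i.e. (T_1+q)·h_b[t(1-q)y_1] = h_b[t(1-q)(y_1+y_2)]. -/

import Mathlib

/-!
STATEMENT 6: Over ℚ(q,t) (here F = ℚ(t)(q)... concretely F = RatFunc (RatFunc ℚ) with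
q the inner and t the outer indeterminate), let T₁ = Δ*_{y₁,y₂} act on F[y₁,y₂]
(y₁ = X 0, y₂ = X 1), characterized by
(y₂-y₁)·(T₁P) = (q-1)·y₁·P + (y₂-q·y₁)·P(y₂,y₁). Then for b ≥ 1,
(T₁+q)·h_b[t(1-q)y₁] = h_b[t(1-q)(y₁+y₂)], explicitly
(T₁+q)((1-q)t^b y₁^b) = (1-q)t^b (y₁^b + (1-q)∑_{a=1}^{b-1} y₁^a y₂^{b-a} + y₂^b).
-/

noncomputable section
open MvPolynomial

abbrev F : Type := RatFunc (RatFunc ℚ)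

noncomputable def q : F := RatFunc.C RatFunc.X

noncomputable def t : F := RatFunc.X

lemma telescope {R : Type*} [CommRing R] (x y : R) :
    ∀ b : ℕ, 1 ≤ b →
      (y - x) * ∑ a ∈ Finset.Ico 1 b, x ^ a * y ^ (b - a) = x * y ^ b - x ^ b * y := by
  intro b hb
  induction b, hb using Nat.le_induction with
  | base => simp
  | succ n hn ih =>
      rw [Finset.sum_Ico_succ_top hn]
      have hsum : ∑ a ∈ Finset.Ico 1 n, x ^ a * y ^ (n + 1 - a) =
          y * ∑ a ∈ Finset.Ico 1 n, x ^ a * y ^ (n - a) := by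
        rw [Finset.mul_sum]
        refine Finset.sum_congr rfl ?_
        intro a ha
        rw [Finset.mem_Ico] at ha
        have : n + 1 - a = (n - a) + 1 := by omega
        rw [this]; ring
      rw [hsum]
      have : (y - x) * (y * ∑ a ∈ Finset.Ico 1 n, x ^ a * y ^ (n - a)
          + x ^ n * y ^ (n + 1 - n)) =
          y * ((y - x) * ∑ a ∈ Finset.Ico 1 n, x ^ a * y ^ (n - a))
          + (y - x) * (x ^ n * y ^ (n + 1 - n)) := by ring
      rw [this, ih]
      have h1 : n + 1 - n = 1 := by omega
      rw [h1]; ring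

theorem T1_plus_q_on_hb
    (T : MvPolynomial (Fin 2) F → MvPolynomial (Fin 2) F)
    (hT : ∀ P : MvPolynomial (Fin 2) F,
      (X 1 - X 0) * T P =
        C (q - 1) * X 0 * P + (X 1 - C q * X 0) * rename (Equiv.swap (0 : Fin 2) 1) P) :
    ∀ b : ℕ, 1 ≤ b →
      T (C ((1 - q) * t ^ b) * X 0 ^ b) + C q * (C ((1 - q) * t ^ b) * X 0 ^ b) =
        C ((1 - q) * t ^ b) *
          (X 0 ^ b + C (1 - q) * ∑ a ∈ Finset.Ico 1 b, X 0 ^ a * X 1 ^ (b - a) + X 1 ^ b) := by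
  intro b hb
  have hne : (X 1 - X 0 : MvPolynomial (Fin 2) F) ≠ 0 := by
    intro h
    have h2 := congrArg (eval fun i : Fin 2 => if i = 1 then (1 : F) else 0) h
    simp at h2
  apply mul_left_cancel₀ hne
  rw [mul_add, hT]
  have hswap : rename (Equiv.swap (0 : Fin 2) 1) (C ((1 - q) * t ^ b) * X 0 ^ b) =
      C ((1 - q) * t ^ b) * X 1 ^ b := by
    simp [Equiv.swap_apply_left]
  rw [hswap]
  have H := telescope (X 0 : MvPolynomial (Fin 2) F) (X 1) b hb
  simp only [map_mul, map_sub, map_one, map_pow] at *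
  linear_combination (-((1 - C q) * C t ^ b * (1 - C q))) * H
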